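/- Let F be a field of characteristic different from 2 and 3 and let Δ ∈ F*. The binary cubic form 3x²y + Δy³ has discriminant 4Δ and is reducible over F, and every reducible binary cubic form over F of discriminant 4Δ is SL₂(F)-equivalent to 3x²y + Δy³. In particular, there is exactly one SL₂(F)-orbit of reducible binary cubic forms over F of discriminant 4Δ. -/

import Mathlib

/-- A binary cubic form `a x³ + 3b x²y + 3c xy² + d y³` over a commutative ring,
recorded by its coefficient quadruple `(a, b, c, d)`. -/
structure BinaryCubic (R : Type*) [CommRing R] where
  a : R
  b : R
  c : R
  d : R

namespace BinaryCubic

variable {R : Type*} [CommRing R]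

/-- Evaluation of the binary cubic form `a x³ + 3b x²y + 3c xy² + d y³`. -/
def eval (f : BinaryCubic R) (x y : R) : R :=
  f.a * x ^ 3 + 3 * f.b * x ^ 2 * y + 3 * f.c * x * y ^ 2 + f.d * y ^ 3

/-- The discriminant `a²d² − 3b²c² + 4ac³ + 4b³d − 6abcd` of a binary cubic form. -/
def disc (f : BinaryCubic R) : R :=
  f.a ^ 2 * f.d ^ 2 - 3 * f.b ^ 2 * f.c ^ 2 + 4 * f.a * f.c ^ 3 + 4 * f.b ^ 3 * f.d
    - 6 * f.a * f.b * f.c * f.d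

/-- The action of a 2×2 matrix `g = (p q; r s)` on binary cubic forms by linear change of
variables: `(g · f)(x, y) = f (p x + q y) (r x + s y)`, written out on coefficients. -/
def act (g : Matrix (Fin 2) (Fin 2) R) (f : BinaryCubic R) : BinaryCubic R where
  a := f.a * g 0 0 ^ 3 + 3 * f.b * g 0 0 ^ 2 * g 1 0 + 3 * f.c * g 0 0 * g 1 0 ^ 2
      + f.d * g 1 0 ^ 3
  b := f.a * g 0 0 ^ 2 * g 0 1
      + f.b * (g 0 0 ^ 2 * g 1 1 + 2 * g 0 0 * g 0 1 * g 1 0)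
      + f.c * (2 * g 0 0 * g 1 0 * g 1 1 + g 0 1 * g 1 0 ^ 2)
      + f.d * g 1 0 ^ 2 * g 1 1
  c := f.a * g 0 0 * g 0 1 ^ 2
      + f.b * (g 0 1 ^ 2 * g 1 0 + 2 * g 0 0 * g 0 1 * g 1 1)
      + f.c * (g 0 0 * g 1 1 ^ 2 + 2 * g 0 1 * g 1 0 * g 1 1)
      + f.d * g 1 0 * g 1 1 ^ 2
  d := f.a * g 0 1 ^ 3 + 3 * f.b * g 0 1 ^ 2 * g 1 1 + 3 * f.c * g 0 1 * g 1 1 ^ 2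
      + f.d * g 1 1 ^ 3

/-- Sanity check: `act` really is the linear change of variables. -/
theorem eval_act (g : Matrix (Fin 2) (Fin 2) R) (f : BinaryCubic R) (x y : R) :
    (act g f).eval x y = f.eval (g 0 0 * x + g 0 1 * y) (g 1 0 * x + g 1 1 * y) := by
  simp only [eval, act]; ring

/-- Two binary cubic forms over `R` are `SL₂(R)`-equivalent if they are related by a
determinant-one linear change of variables. -/
def SLEquiv (f f' : BinaryCubic R) : Prop :=
  ∃ g : Matrix (Fin 2) (Fin 2) R, g.det = 1 ∧ act g f = f'

/-- Scalar multiplication of a binary cubic form (multiplying all coefficients). -/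
def smul (r : R) (f : BinaryCubic R) : BinaryCubic R :=
  ⟨r * f.a, r * f.b, r * f.c, r * f.d⟩

/-- The scaled Hessian `h_f(x,y) = (b²−ac)x² + (bc−ad)xy + (c²−bd)y²` of a binary cubic form. -/
def hess (f : BinaryCubic R) (x y : R) : R :=
  (f.b ^ 2 - f.a * f.c) * x ^ 2 + (f.b * f.c - f.a * f.d) * x * y
    + (f.c ^ 2 - f.b * f.d) * y ^ 2

/-- The Jacobian covariant `g_f = f_x · (h_f)_y − f_y · (h_f)_x` of a binary cubic form,
written out as a function of `x` and `y`. -/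
def gcov (f : BinaryCubic R) (x y : R) : R :=
  (3 * f.a * x ^ 2 + 6 * f.b * x * y + 3 * f.c * y ^ 2)
      * ((f.b * f.c - f.a * f.d) * x + 2 * (f.c ^ 2 - f.b * f.d) * y)
    - (3 * f.b * x ^ 2 + 6 * f.c * x * y + 3 * f.d * y ^ 2)
      * (2 * (f.b ^ 2 - f.a * f.c) * x + (f.b * f.c - f.a * f.d) * y)

/-- A binary cubic form over a field is reducible if it factors as a homogeneous linear form
times a homogeneous quadratic form over the field. -/
def Reducible {F : Type*} [Field F] (f : BinaryCubic F) : Prop :=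
  ∃ l₁ l₂ q₁ q₂ q₃ : F, ∀ x y : F,
    f.eval x y = (l₁ * x + l₂ * y) * (q₁ * x ^ 2 + q₂ * x * y + q₃ * y ^ 2)

/-- Coefficientwise image of a binary cubic form under a ring homomorphism. -/
def map {R S : Type*} [CommRing R] [CommRing S] (φ : R →+* S) (f : BinaryCubic R) :
    BinaryCubic S :=
  ⟨φ f.a, φ f.b, φ f.c, φ f.d⟩

lemma act_act (g h : Matrix (Fin 2) (Fin 2) R) (f : BinaryCubic R) :
    act g (act h f) = act (h * g) f := by
  simp only [act, Matrix.mul_apply, Fin.sum_univ_two, mk.injEq]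
  refine ⟨by ring, by ring, by ring, by ring⟩

lemma disc_act (g : Matrix (Fin 2) (Fin 2) R) (f : BinaryCubic R) :
    disc (act g f) = g.det ^ 6 * disc f := by
  simp only [disc, act, Matrix.det_fin_two]
  ring

lemma act_a_eval (g : Matrix (Fin 2) (Fin 2) R) (f : BinaryCubic R) :
    (act g f).a = f.eval (g 0 0) (g 1 0) := by
  simp only [act, eval]

end BinaryCubic

open BinaryCubic in
/-- Over a field `F` of characteristic ≠ 2, 3 and for `Δ ∈ F*`, the binary cubic
form `3x²y + Δy³` has discriminant `4Δ` and is reducible, and every reducible binary cubic form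
over `F` of discriminant `4Δ` is `SL₂(F)`-equivalent to it; in particular there is exactly one
`SL₂(F)`-orbit of reducible binary cubic forms of discriminant `4Δ`. -/
theorem reducible_orbit_unique {F : Type*} [Field F]
    (h2 : (2 : F) ≠ 0) (h3 : (3 : F) ≠ 0) (Δ : F) (hΔ : Δ ≠ 0) :
    disc (⟨0, 1, 0, Δ⟩ : BinaryCubic F) = 4 * Δ ∧
    Reducible (⟨0, 1, 0, Δ⟩ : BinaryCubic F) ∧
    ∀ f : BinaryCubic F, Reducible f → disc f = 4 * Δ →
      SLEquiv f (⟨0, 1, 0, Δ⟩ : BinaryCubic F) := by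
  have h4 : (4 : F) ≠ 0 := by
    have : (4 : F) = 2 * 2 := by norm_num
    rw [this]; exact mul_ne_zero h2 h2
  have h4Δ : (4 : F) * Δ ≠ 0 := mul_ne_zero h4 hΔ
  refine ⟨by simp only [disc]; ring, ⟨0, 1, 3, 0, Δ, fun x y => by simp only [eval]; ring⟩, ?_⟩
  intro f hred hdisc
  obtain ⟨l₁, l₂, q₁, q₂, q₃, hfac⟩ := hred
  -- the linear factor is nonzero
  have hl : l₁ ≠ 0 ∨ l₂ ≠ 0 := by
    by_contra h
    push_neg at h
    obtain ⟨e1, e2⟩ := h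
    subst e1; subst e2
    have hz : ∀ x y : F, f.eval x y = 0 := by
      intro x y; rw [hfac x y]; ring
    have ha : f.a = 0 := by have := hz 1 0; simpa [eval] using this
    have hd : f.d = 0 := by have := hz 0 1; simpa [eval] using this
    have e11 := hz 1 1
    have e1m1 := hz 1 (-1)
    simp only [eval, ha, hd] at e11 e1m1
    have h6 : (6 : F) ≠ 0 := by
      have : (6 : F) = 2 * 3 := by norm_num
      rw [this]; exact mul_ne_zero h2 h3
    have hb : f.b = 0 := by
      have : (6 : F) * f.b = 0 := by linear_combination e11 - e1m1
      exact (mul_eq_zero.mp this).resolve_left h6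
    have hc : f.c = 0 := by
      have : (6 : F) * f.c = 0 := by linear_combination e11 + e1m1
      exact (mul_eq_zero.mp this).resolve_left h6
    apply h4Δ
    rw [← hdisc]
    simp [disc, ha, hb, hc, hd]
  -- Step 1: an SL₂ move making the `a`-coefficient zero
  obtain ⟨g₁, hg₁det, hg₁a⟩ :
      ∃ g : Matrix (Fin 2) (Fin 2) F, g.det = 1 ∧ (act g f).a = 0 := by
    rcases eq_or_ne l₂ 0 with h0 | h0
    · have hl₁ : l₁ ≠ 0 := by subst h0; tauto
      refine ⟨!![0, l₁⁻¹; -l₁, 0], ?_, ?_⟩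
      · rw [Matrix.det_fin_two_of]; field_simp; ring
      · rw [act_a_eval]
        have : (!![0, l₁⁻¹; -l₁, 0] : Matrix (Fin 2) (Fin 2) F) 0 0 = 0 ∧
            (!![0, l₁⁻¹; -l₁, 0] : Matrix (Fin 2) (Fin 2) F) 1 0 = -l₁ := by
          simp
        rw [this.1, this.2, hfac, h0]; ring
    · refine ⟨!![l₂, 0; -l₁, l₂⁻¹], ?_, ?_⟩
      · rw [Matrix.det_fin_two_of]; field_simp; ring
      · rw [act_a_eval]
        have : (!![l₂, 0; -l₁, l₂⁻¹] : Matrix (Fin 2) (Fin 2) F) 0 0 = l₂ ∧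
            (!![l₂, 0; -l₁, l₂⁻¹] : Matrix (Fin 2) (Fin 2) F) 1 0 = -l₁ := by
          simp
        rw [this.1, this.2, hfac]; ring
  set f₁ := act g₁ f with hf₁
  have hdisc₁ : disc f₁ = 4 * Δ := by
    rw [hf₁, disc_act, hg₁det, hdisc]; ring
  have hb : f₁.b ≠ 0 := by
    intro hb0
    apply h4Δ
    rw [← hdisc₁]
    simp [disc, hg₁a, hb0]
  have key : 4 * f₁.b ^ 3 * f₁.d - 3 * f₁.b ^ 2 * f₁.c ^ 2 = 4 * Δ := by
    rw [← hdisc₁]; simp only [disc, hg₁a]; ring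
  -- Step 2: normalize
  set g₂ : Matrix (Fin 2) (Fin 2) F := !![f₁.b⁻¹, -(f₁.c / 2); 0, f₁.b] with hg₂
  have hg₂det : g₂.det = 1 := by
    rw [hg₂, Matrix.det_fin_two_of]; field_simp; ring
  have hent : g₂ 0 0 = f₁.b⁻¹ ∧ g₂ 0 1 = -(f₁.c / 2) ∧ g₂ 1 0 = 0 ∧ g₂ 1 1 = f₁.b := by
    rw [hg₂]; simp
  have heq : act g₂ f₁ = (⟨0, 1, 0, Δ⟩ : BinaryCubic F) := by
    obtain ⟨e00, e01, e10, e11⟩ := hent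
    simp only [act, e00, e01, e10, e11, mk.injEq, hg₁a]
    refine ⟨by ring, by field_simp; ring, by field_simp; ring, ?_⟩
    have hinv : f₁.b⁻¹ * f₁.b = 1 := inv_mul_cancel₀ hb
    field_simp
    linear_combination 2 * key
  exact ⟨g₁ * g₂, by rw [Matrix.det_mul, hg₁det, hg₂det, mul_one],
    by rw [← act_act, ← hf₁, heq]⟩
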